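/- arXiv:2505.23864 — 2 statements merged into one kernel-verified Lean document; each statement's English description precedes it below -/
import Mathlib

section
/- Let h_1, …, h_N be vectors in ℝ^{d'}, let s_1, …, s_N be pairwise distinct real numbers, and let π be the permutation of {1, …, N} that sorts the scores in increasing order: s_{π(1)} < s_{π(2)} < ⋯ < s_{π(N)}. For σ > 0 let z_i(σ) = Σ_{j=1}^N β_{ij}(σ) h_j be the kernel-smoothed embeddings, and let Z̃(σ) and H̃ be the sequences with t-th entries z_{π(t)}(σ) and h_{π(t)} respectively. Then the Frobenius norm ‖Z̃(σ) − H̃‖_F = (Σ_{t=1}^N ‖z_{π(t)}(σ) − h_{π(t)}‖²)^{1/2} tends to 0 as σ → 0⁺. -/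
open Filter Topology

/-- Gaussian kernel `K_{ij}(σ) = exp(−(s_i − s_j)²/σ²)`. -/
noncomputable def gaussKernel {N : ℕ} (s : Fin N → ℝ) (σ : ℝ) (i j : Fin N) : ℝ :=
  Real.exp (-(s i - s j) ^ 2 / σ ^ 2)

/-- Normalized kernel weights `β_{ij}(σ) = K_{ij}(σ) / Σ_l K_{il}(σ)`. -/
noncomputable def kernelWeight {N : ℕ} (s : Fin N → ℝ) (σ : ℝ) (i j : Fin N) : ℝ :=
  gaussKernel s σ i j / ∑ l, gaussKernel s σ i l

/-- Kernel-smoothed embeddings `z_i(σ) = Σ_j β_{ij}(σ) h_j`. -/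
noncomputable def smoothedEmb {N d' : ℕ} (s : Fin N → ℝ)
    (h : Fin N → EuclideanSpace ℝ (Fin d')) (σ : ℝ) (i : Fin N) :
    EuclideanSpace ℝ (Fin d') :=
  ∑ j, kernelWeight s σ i j • h j

/-- Frobenius norm of a sequence of vectors: `‖X‖_F = (Σ_t ‖X_t‖²)^{1/2}`. -/
noncomputable def frobNorm {N d' : ℕ} (X : Fin N → EuclideanSpace ℝ (Fin d')) : ℝ :=
  Real.sqrt (∑ t, ‖X t‖ ^ 2)


lemma kernelWeight_tendsto {N : ℕ} (s : Fin N → ℝ) (hs : Function.Injective s) (i j : Fin N) :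
    Tendsto (fun σ : ℝ => kernelWeight s σ i j) (nhdsWithin 0 (Set.Ioi 0))
      (nhds (if j = i then 1 else 0)) := by
  have gauss : ∀ j : Fin N, Tendsto (fun σ : ℝ => gaussKernel s σ i j)
      (nhdsWithin 0 (Set.Ioi 0)) (nhds (if j = i then 1 else 0)) := by
    intro j
    by_cases hij : j = i
    · subst hij
      simp only [gaussKernel, sub_self, if_true]
      have : (fun σ : ℝ => Real.exp (-(0:ℝ) ^ 2 / σ ^ 2)) = fun _ => 1 := by
        funext σ; simp
      rw [this]; exact tendsto_const_nhds
    · simp only [hij, if_false]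
      set c : ℝ := (s i - s j) ^ 2 with hc
      have hcpos : (0:ℝ) < c := by
        have hne : s i - s j ≠ 0 := sub_ne_zero.mpr (fun h => hij (hs h).symm)
        positivity
      have hsq : Tendsto (fun σ : ℝ => σ ^ 2) (nhdsWithin 0 (Set.Ioi 0))
          (nhdsWithin 0 (Set.Ioi 0)) := by
        apply tendsto_nhdsWithin_of_tendsto_nhds_of_eventually_within
        · have : Tendsto (fun σ : ℝ => σ ^ 2) (nhds 0) (nhds ((0:ℝ) ^ 2)) :=
            (continuous_pow 2).tendsto 0
          simpa using this.mono_left nhdsWithin_le_nhds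
        · filter_upwards [self_mem_nhdsWithin] with σ hσ
          exact pow_pos (Set.mem_Ioi.mp hσ) 2
      have hinv : Tendsto (fun σ : ℝ => (σ ^ 2)⁻¹) (nhdsWithin 0 (Set.Ioi 0)) atTop :=
        tendsto_inv_nhdsGT_zero.comp hsq
      have hdiv : Tendsto (fun σ : ℝ => c * (σ ^ 2)⁻¹) (nhdsWithin 0 (Set.Ioi 0)) atTop :=
        hinv.const_mul_atTop hcpos
      have hneg : Tendsto (fun σ : ℝ => -(c * (σ ^ 2)⁻¹)) (nhdsWithin 0 (Set.Ioi 0)) atBot :=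
        tendsto_neg_atTop_atBot.comp hdiv
      have := Real.tendsto_exp_atBot.comp hneg
      have heq : (fun σ : ℝ => gaussKernel s σ i j)
          = fun σ => Real.exp (-(c * (σ ^ 2)⁻¹)) := by
        funext σ
        simp [gaussKernel, hc, neg_div, div_eq_mul_inv]
      rw [heq]
      exact this
  have hsum : Tendsto (fun σ : ℝ => ∑ l, gaussKernel s σ i l)
      (nhdsWithin 0 (Set.Ioi 0)) (nhds 1) := by
    have := tendsto_finset_sum Finset.univ (fun l _ => gauss l)
    simpa using this
  have : Tendsto (fun σ : ℝ => gaussKernel s σ i j / ∑ l, gaussKernel s σ i l)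
      (nhdsWithin 0 (Set.Ioi 0)) (nhds ((if j = i then 1 else 0) / 1)) :=
    (gauss j).div hsum one_ne_zero
  simpa [kernelWeight] using this

lemma smoothedEmb_tendsto {N d' : ℕ} (s : Fin N → ℝ) (hs : Function.Injective s)
    (h : Fin N → EuclideanSpace ℝ (Fin d')) (i : Fin N) :
    Tendsto (fun σ : ℝ => smoothedEmb s h σ i) (nhdsWithin 0 (Set.Ioi 0)) (nhds (h i)) := by
  have : Tendsto (fun σ : ℝ => ∑ j, kernelWeight s σ i j • h j)
      (nhdsWithin 0 (Set.Ioi 0)) (nhds (∑ j, (if j = i then (1:ℝ) else 0) • h j)) := by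
    apply tendsto_finset_sum
    intro j _
    exact (kernelWeight_tendsto s hs i j).smul tendsto_const_nhds
  simpa [smoothedEmb, Finset.sum_ite_eq'] using this

/-- **Matrix convergence in Frobenius norm** (Lemma D.3). With pairwise distinct scores
sorted increasingly by the permutation `π`, the Frobenius norm of the difference between
the sorted smoothed embeddings `Z̃(σ)` and the sorted original embeddings `H̃` tends to
`0` as `σ → 0⁺`. -/
theorem frobNorm_tendsto_zero {N d' : ℕ} (s : Fin N → ℝ) (hs : Function.Injective s)
    (h : Fin N → EuclideanSpace ℝ (Fin d')) (π : Equiv.Perm (Fin N))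
    (hπ : StrictMono fun t => s (π t)) :
    Tendsto
      (fun σ : ℝ => frobNorm (fun t => smoothedEmb s h σ (π t) - h (π t)))
      (nhdsWithin 0 (Set.Ioi 0)) (nhds 0) := by
  have key : ∀ t : Fin N, Tendsto (fun σ : ℝ => ‖smoothedEmb s h σ (π t) - h (π t)‖ ^ 2)
      (nhdsWithin 0 (Set.Ioi 0)) (nhds 0) := by
    intro t
    have := (smoothedEmb_tendsto s hs h (π t)).sub
      (tendsto_const_nhds (x := h (π t)) (f := nhdsWithin (0:ℝ) (Set.Ioi 0)))
    have hnorm := (this.norm).pow 2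
    simpa using hnorm
  have hsum : Tendsto (fun σ : ℝ => ∑ t, ‖smoothedEmb s h σ (π t) - h (π t)‖ ^ 2)
      (nhdsWithin 0 (Set.Ioi 0)) (nhds 0) := by
    have := tendsto_finset_sum Finset.univ (fun t _ => key t)
    simpa using this
  have hsqrt := (Real.continuous_sqrt.tendsto 0).comp hsum
  simpa [frobNorm, Function.comp_def] using hsqrt
end

section
/- Fix vectors h_1, …, h_N ∈ ℝ^{d'}, σ > 0, and an index i. Define s_j(a) = ⟨a, h_j⟩, K_{ij}(a) = exp(−(s_i(a) − s_j(a))²/σ²), β_{ij}(a) = K_{ij}(a)/Σ_{l=1}^N K_{il}(a), and the kernel-smoothed embedding z_i(a) = Σ_{j=1}^N β_{ij}(a) h_j. Then z_i is Fréchet differentiable, and for every unit vector a and every v ∈ ℝ^{d'} with ⟨a, v⟩ = 0, the derivative of z_i at a in the direction v equals −(2/σ²) Σ_{j=1}^N β_{ij}(a) (s_i(a) − s_j(a)) · ⟨(h_i − h_j) − (s_i(a) − s_j(a)) a, v⟩ · (h_j − z_i(a)). -/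
open scoped RealInnerProductSpace

variable {N d' : ℕ}

/-- Similarity scores `s_j(a) = ⟪a, h_j⟫`. -/
noncomputable def score (h : Fin N → EuclideanSpace ℝ (Fin d'))
    (a : EuclideanSpace ℝ (Fin d')) (j : Fin N) : ℝ :=
  ⟪a, h j⟫

/-- Gaussian kernel entries `K_{ij}(a) = exp(−(s_i(a) − s_j(a))²/σ²)`. -/
noncomputable def kerEntry (h : Fin N → EuclideanSpace ℝ (Fin d')) (σ : ℝ)
    (i : Fin N) (a : EuclideanSpace ℝ (Fin d')) (j : Fin N) : ℝ :=
  Real.exp (-(score h a i - score h a j) ^ 2 / σ ^ 2)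

/-- Normalized kernel weights `β_{ij}(a) = K_{ij}(a) / Σ_l K_{il}(a)`. -/
noncomputable def kerWeight (h : Fin N → EuclideanSpace ℝ (Fin d')) (σ : ℝ)
    (i : Fin N) (a : EuclideanSpace ℝ (Fin d')) (j : Fin N) : ℝ :=
  kerEntry h σ i a j / ∑ l, kerEntry h σ i a l

/-- Kernel-smoothed embedding `z_i(a) = Σ_j β_{ij}(a) h_j`. -/
noncomputable def smoothedZ (h : Fin N → EuclideanSpace ℝ (Fin d')) (σ : ℝ)
    (i : Fin N) (a : EuclideanSpace ℝ (Fin d')) : EuclideanSpace ℝ (Fin d') :=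
  ∑ j, kerWeight h σ i a j • h j

/-- derivative coefficient of kerEntry -/
noncomputable def kerC (h : Fin N → EuclideanSpace ℝ (Fin d')) (σ : ℝ)
    (i : Fin N) (a : EuclideanSpace ℝ (Fin d')) (j : Fin N) : ℝ :=
  kerEntry h σ i a j * (-(2 * (score h a i - score h a j)) / σ ^ 2)

noncomputable def kerD (h : Fin N → EuclideanSpace ℝ (Fin d')) (i j : Fin N) :
    EuclideanSpace ℝ (Fin d') →L[ℝ] ℝ :=
  innerSL ℝ (h i) - innerSL ℝ (h j)

theorem hasFDerivAt_kerEntry (h : Fin N → EuclideanSpace ℝ (Fin d')) (σ : ℝ) (i j : Fin N)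
    (a : EuclideanSpace ℝ (Fin d')) :
    HasFDerivAt (fun a => kerEntry h σ i a j) (kerC h σ i a j • kerD h i j) a := by
  have hs : ∀ k : Fin N, HasFDerivAt (fun a => score h a k) (innerSL ℝ (h k)) a := by
    intro k
    have : (fun a : EuclideanSpace ℝ (Fin d') => score h a k) = ⇑(innerSL ℝ (h k)) := by
      funext x; simp [score, real_inner_comm, mul_comm]
    rw [this]; exact (innerSL ℝ (h k)).hasFDerivAt
  have hd : HasFDerivAt (fun a => score h a i - score h a j) (kerD h i j) a :=
    (hs i).sub (hs j)
  have hu : HasFDerivAt (fun a => -(score h a i - score h a j) ^ 2 / σ ^ 2)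
      ((-(2 * (score h a i - score h a j)) / σ ^ 2) • kerD h i j) a := by
    have h2 := ((hd.mul hd).neg).const_mul ((σ ^ 2)⁻¹)
    have hf : (fun a => -(score h a i - score h a j) ^ 2 / σ ^ 2)
        = fun a => (σ ^ 2)⁻¹ * -((score h a i - score h a j) * (score h a i - score h a j)) := by
      funext x; ring
    rw [hf]
    refine HasFDerivAt.congr_fderiv h2 ?_
    ext v
    simp
    ring
  have heq : kerC h σ i a j • kerD h i j
      = Real.exp (-(score h a i - score h a j) ^ 2 / σ ^ 2) •
        (-(2 * (score h a i - score h a j)) / σ ^ 2) • kerD h i j := by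
    rw [smul_smul, kerC, kerEntry]
  rw [show (fun a => kerEntry h σ i a j)
      = fun a => Real.exp (-(score h a i - score h a j) ^ 2 / σ ^ 2) from rfl, heq]
  exact hu.exp

theorem sumK_pos (h : Fin N → EuclideanSpace ℝ (Fin d')) (σ : ℝ) (i : Fin N)
    (a : EuclideanSpace ℝ (Fin d')) : 0 < ∑ l, kerEntry h σ i a l := by
  have : Nonempty (Fin N) := ⟨i⟩
  exact Finset.sum_pos (fun l _ => Real.exp_pos _) Finset.univ_nonempty

theorem hasFDerivAt_kerWeight (h : Fin N → EuclideanSpace ℝ (Fin d')) (σ : ℝ) (i j : Fin N)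
    (a : EuclideanSpace ℝ (Fin d')) :
    HasFDerivAt (fun a => kerWeight h σ i a j)
      ((1 / (∑ l, kerEntry h σ i a l) ^ 2) •
        ((∑ l, kerEntry h σ i a l) • (kerC h σ i a j • kerD h i j) -
          kerEntry h σ i a j • ∑ l, kerC h σ i a l • kerD h i l)) a := by
  have hS : HasFDerivAt (fun a => ∑ l, kerEntry h σ i a l)
      (∑ l, kerC h σ i a l • kerD h i l) a :=
    HasFDerivAt.fun_sum fun l _ => hasFDerivAt_kerEntry h σ i l a
  have hSne : (∑ l, kerEntry h σ i a l) ≠ 0 := (sumK_pos h σ i a).ne'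
  have hInv : HasFDerivAt (fun a => (∑ l, kerEntry h σ i a l)⁻¹)
      ((ContinuousLinearMap.smulRight (1 : ℝ →L[ℝ] ℝ)
          (-((∑ l, kerEntry h σ i a l) ^ 2)⁻¹)).comp
        (∑ l, kerC h σ i a l • kerD h i l)) a :=
    (hasFDerivAt_inv hSne).comp a hS
  have hmul := (hasFDerivAt_kerEntry h σ i j a).mul hInv
  have hf : (fun a => kerWeight h σ i a j)
      = fun a => kerEntry h σ i a j * (∑ l, kerEntry h σ i a l)⁻¹ := by
    funext x; rw [kerWeight, div_eq_mul_inv]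
  rw [hf]
  have heq : (1 / (∑ l, kerEntry h σ i a l) ^ 2) •
        ((∑ l, kerEntry h σ i a l) • (kerC h σ i a j • kerD h i j) -
          kerEntry h σ i a j • ∑ l, kerC h σ i a l • kerD h i l)
      = kerEntry h σ i a j •
          ((ContinuousLinearMap.smulRight (1 : ℝ →L[ℝ] ℝ)
              (-((∑ l, kerEntry h σ i a l) ^ 2)⁻¹)).comp
            (∑ l, kerC h σ i a l • kerD h i l)) +
        (∑ l, kerEntry h σ i a l)⁻¹ • (kerC h σ i a j • kerD h i j) := by
    ext v
    simp only [ContinuousLinearMap.smul_apply, ContinuousLinearMap.sub_apply,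
      ContinuousLinearMap.add_apply, ContinuousLinearMap.comp_apply,
      ContinuousLinearMap.smulRight_apply, ContinuousLinearMap.one_apply,
      ContinuousLinearMap.coe_sum', Finset.sum_apply, smul_eq_mul]
    generalize (kerD h i j) v = dj
    generalize hT : (∑ x : Fin N, kerC h σ i a x * (kerD h i x) v) = T
    field_simp
    ring
  rw [heq]
  exact hmul

noncomputable def zDeriv (h : Fin N → EuclideanSpace ℝ (Fin d')) (σ : ℝ) (i : Fin N)
    (a : EuclideanSpace ℝ (Fin d')) :
    EuclideanSpace ℝ (Fin d') →L[ℝ] EuclideanSpace ℝ (Fin d') :=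
  ∑ j, ((1 / (∑ l, kerEntry h σ i a l) ^ 2) •
        ((∑ l, kerEntry h σ i a l) • (kerC h σ i a j • kerD h i j) -
          kerEntry h σ i a j • ∑ l, kerC h σ i a l • kerD h i l)).smulRight (h j)

theorem hasFDerivAt_smoothedZ (h : Fin N → EuclideanSpace ℝ (Fin d')) (σ : ℝ) (i : Fin N)
    (a : EuclideanSpace ℝ (Fin d')) :
    HasFDerivAt (smoothedZ h σ i) (zDeriv h σ i a) a := by
  have : HasFDerivAt (fun a => ∑ j, kerWeight h σ i a j • h j) (zDeriv h σ i a) a :=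
    HasFDerivAt.fun_sum fun j _ => (hasFDerivAt_kerWeight h σ i j a).smul_const (h j)
  exact this

/-- **Gradient of the kernel-smoothed embedding** (Lemma C.3). The map
`a ↦ z_i(a) = Σ_j β_{ij}(a) h_j` is Fréchet differentiable, and for every unit vector `a`
and tangent direction `v` (`⟪a, v⟫ = 0`), its derivative at `a` in direction `v` equals
`−(2/σ²) Σ_j β_{ij}(a)(s_i(a) − s_j(a)) ⟪(h_i − h_j) − (s_i(a) − s_j(a)) a, v⟫ (h_j − z_i(a))`. -/
theorem smoothedZ_tangential_gradient (h : Fin N → EuclideanSpace ℝ (Fin d'))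
    (σ : ℝ) (hσ : 0 < σ) (i : Fin N) :
    Differentiable ℝ (smoothedZ h σ i) ∧
      ∀ a : EuclideanSpace ℝ (Fin d'), ‖a‖ = 1 →
        ∀ v : EuclideanSpace ℝ (Fin d'), ⟪a, v⟫ = 0 →
          fderiv ℝ (smoothedZ h σ i) a v =
            ∑ j, (-(2 / σ ^ 2) * kerWeight h σ i a j * (score h a i - score h a j) *
                ⟪(h i - h j) - (score h a i - score h a j) • a, v⟫) •
              (h j - smoothedZ h σ i a) := by
  constructor
  · exact fun a => (hasFDerivAt_smoothedZ h σ i a).differentiableAt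
  intro a ha v hav
  rw [(hasFDerivAt_smoothedZ h σ i a).fderiv]
  have hS0 : (∑ l, kerEntry h σ i a l) ≠ 0 := (sumK_pos h σ i a).ne'
  have hσ2 : (σ : ℝ) ^ 2 ≠ 0 := pow_ne_zero 2 hσ.ne'
  -- rewrite RHS coefficients
  have hrhs : ∀ j : Fin N, (-(2 / σ ^ 2) * kerWeight h σ i a j * (score h a i - score h a j) *
        ⟪(h i - h j) - (score h a i - score h a j) • a, v⟫)
      = kerC h σ i a j * kerD h i j v / (∑ l, kerEntry h σ i a l) := by
    intro j
    have hin : (⟪(h i - h j) - (score h a i - score h a j) • a, v⟫ : ℝ) = kerD h i j v := by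
      rw [inner_sub_left, inner_sub_left, real_inner_smul_left, hav, mul_zero, sub_zero]
      simp only [kerD, ContinuousLinearMap.sub_apply, innerSL_apply_apply]
    rw [hin, kerWeight, kerC]
    ring
  simp only [hrhs]
  -- abbreviations
  set S : ℝ := ∑ l, kerEntry h σ i a l with hSdef
  set T : ℝ := ∑ l, kerC h σ i a l * kerD h i l v with hTdef
  -- compute LHS
  have hL : zDeriv h σ i a v
      = ∑ j, (kerC h σ i a j * kerD h i j v / S - T / S * kerWeight h σ i a j) • h j := by
    rw [zDeriv]
    rw [ContinuousLinearMap.sum_apply]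
    refine Finset.sum_congr rfl fun j _ => ?_
    rw [ContinuousLinearMap.smulRight_apply]
    congr 1
    simp only [ContinuousLinearMap.smul_apply, ContinuousLinearMap.sub_apply,
      ContinuousLinearMap.coe_sum', Finset.sum_apply, ContinuousLinearMap.smul_apply,
      smul_eq_mul, ← hSdef, ← hTdef]
    rw [kerWeight, ← hSdef]
    field_simp
  rw [hL]
  -- compute RHS
  have hsum : ∑ j, (kerC h σ i a j * kerD h i j v / S) = T / S := by
    rw [hTdef, Finset.sum_div]
  calc ∑ j, (kerC h σ i a j * kerD h i j v / S - T / S * kerWeight h σ i a j) • h j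
      = ∑ j, ((kerC h σ i a j * kerD h i j v / S) • h j
          - (T / S * kerWeight h σ i a j) • h j) := by
        simp [sub_smul]
    _ = ∑ j, (kerC h σ i a j * kerD h i j v / S) • h j
          - ∑ j, (T / S * kerWeight h σ i a j) • h j := Finset.sum_sub_distrib _ _
    _ = ∑ j, (kerC h σ i a j * kerD h i j v / S) • h j
          - (T / S) • smoothedZ h σ i a := by
        rw [smoothedZ, Finset.smul_sum]
        simp [smul_smul]
    _ = ∑ j, (kerC h σ i a j * kerD h i j v / S) • h j
          - (∑ j, kerC h σ i a j * kerD h i j v / S) • smoothedZ h σ i a := by rw [hsum]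
    _ = ∑ j, (kerC h σ i a j * kerD h i j v / S) • h j
          - ∑ j, (kerC h σ i a j * kerD h i j v / S) • smoothedZ h σ i a := by
        rw [Finset.sum_smul]
    _ = ∑ j, (kerC h σ i a j * kerD h i j v / S) • (h j - smoothedZ h σ i a) := by
        rw [← Finset.sum_sub_distrib]
        simp [smul_sub]
end
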